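/- Let m be a natural number and work with matrices indexed by Fin 2 ⊕ Fin m over ℂ. Let A be the block matrix with blocks A₁₁ = I₂ (the 2×2 identity), A₁₂ = 0, A₂₁ = 0, A₂₂ = 0, and let B be a symmetric matrix (Bᵀ = B) with blocks B₁₁, B₁₂, B₂₁ = B₁₂ᵀ, B₂₂. Let ε denote the nilpotent generator of the dual numbers ℂ[ε]/(ε²) and let M = A' + ε•B' over ℂ[ε]/(ε²). Then all 3×3 minors of M vanish if and only if B₂₂ = 0, i.e. B (inr i) (inr j) = 0 for all i, j ∈ Fin m. -/

import Mathlib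

open Matrix

set_option synthInstance.maxHeartbeats 1000000
set_option maxHeartbeats 1000000

/-- The determinant of a product of a `3 × 2` and a `2 × 3` matrix vanishes. -/
lemma det_mul_rect_aux {R : Type*} [CommRing R] (L : Matrix (Fin 3) (Fin 2) R)
    (Rm : Matrix (Fin 2) (Fin 3) R) : (L * Rm).det = 0 := by
  have h : L * Rm = (Matrix.of fun i (k : Fin 3) => if h : (k : ℕ) < 2 then L i ⟨k, h⟩ else 0) *
      (Matrix.of fun (k : Fin 3) j => if h : (k : ℕ) < 2 then Rm ⟨k, h⟩ j else 0) := by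
    ext i j
    simp [Matrix.mul_apply, Fin.sum_univ_three, Fin.sum_univ_two]
  rw [h, Matrix.det_mul]
  have h2 : (Matrix.of fun i (k : Fin 3) => if h : (k : ℕ) < 2 then L i ⟨k, h⟩ else 0).det = 0 := by
    apply Matrix.det_eq_zero_of_column_eq_zero 2
    intro i; simp
  rw [h2, zero_mul]

/-- Over indices `Fin 2 ⊕ Fin m`, let `A = fromBlocks I₂ 0 0 0` and let `B`
be symmetric.  With `M = A' + ε•B'` over the dual numbers `ℂ[ε]/(ε²)`, all `3×3` minors
of `M` vanish iff the lower-right block of `B` is zero, i.e. `B (inr i) (inr j) = 0`. -/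
theorem minors_dualNumber_blocks_vanish_iff (m : ℕ)
    (B : Matrix (Fin 2 ⊕ Fin m) (Fin 2 ⊕ Fin m) ℂ) (hB : B.transpose = B) :
    (∀ f g : Fin 3 → (Fin 2 ⊕ Fin m),
        ((((Matrix.fromBlocks (1 : Matrix (Fin 2) (Fin 2) ℂ) 0 0 0).map
              (algebraMap ℂ (DualNumber ℂ)) +
            (DualNumber.eps : DualNumber ℂ) • B.map (algebraMap ℂ (DualNumber ℂ))).submatrix
              f g).det = 0))
      ↔ (∀ i j : Fin m, B (Sum.inr i) (Sum.inr j) = 0) := by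
  constructor
  · intro h i j
    have h1 := h ![Sum.inl 0, Sum.inl 1, Sum.inr i] ![Sum.inl 0, Sum.inl 1, Sum.inr j]
    have h2 := congrArg TrivSqZeroExt.snd h1
    rw [Matrix.det_fin_three] at h2
    simpa [Matrix.det_fin_three, TrivSqZeroExt.snd_mul, TrivSqZeroExt.fst_mul,
      smul_eq_mul, TrivSqZeroExt.algebraMap_eq_inl, Matrix.one_apply] using h2
  · intro hz f g
    set ρ := algebraMap ℂ (DualNumber ℂ)
    set A : Matrix (Fin 2 ⊕ Fin m) (Fin 2 ⊕ Fin m) ℂ :=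
      Matrix.fromBlocks (1 : Matrix (Fin 2) (Fin 2) ℂ) 0 0 0 with hA
    set X : Matrix (Fin 2 ⊕ Fin m) (Fin 2 ⊕ Fin m) ℂ :=
      Matrix.fromBlocks 0 0 (B.toBlocks₂₁) 0 with hX
    set Y : Matrix (Fin 2 ⊕ Fin m) (Fin 2 ⊕ Fin m) ℂ :=
      Matrix.fromBlocks (B.toBlocks₁₁) (B.toBlocks₁₂) 0 0 with hY
    have key : X * A + A * Y = B := by
      rw [hX, hY, hA, Matrix.fromBlocks_multiply, Matrix.fromBlocks_multiply]
      have h22 : B.toBlocks₂₂ = 0 := by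
        ext i j; exact hz i j
      conv_rhs => rw [← Matrix.fromBlocks_toBlocks B]
      rw [h22]
      simp [Matrix.fromBlocks_add]
    set P : Matrix (Fin 2 ⊕ Fin m) (Fin 2 ⊕ Fin m) (DualNumber ℂ) :=
      1 + (DualNumber.eps : DualNumber ℂ) • X.map ρ with hP
    set Q : Matrix (Fin 2 ⊕ Fin m) (Fin 2 ⊕ Fin m) (DualNumber ℂ) :=
      1 + (DualNumber.eps : DualNumber ℂ) • Y.map ρ with hQ
    have mapmul : ∀ (C D : Matrix (Fin 2 ⊕ Fin m) (Fin 2 ⊕ Fin m) ℂ),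
        (C * D).map ρ = C.map ρ * D.map ρ := fun C D => Matrix.map_mul
    have fact : A.map ρ + (DualNumber.eps : DualNumber ℂ) • B.map ρ = P * (A.map ρ) * Q := by
      rw [hP, hQ, add_mul, one_mul, mul_add, mul_one, add_mul]
      have e2 : ((DualNumber.eps : DualNumber ℂ) • X.map ρ) * A.map ρ *
          ((DualNumber.eps : DualNumber ℂ) • Y.map ρ) = 0 := by
        rw [Matrix.smul_mul, Matrix.smul_mul, Matrix.mul_smul, smul_smul,
          DualNumber.eps_mul_eps, zero_smul]
      rw [e2, add_zero, Matrix.smul_mul, Matrix.mul_smul, ← mapmul, ← mapmul, add_assoc,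
        ← smul_add, ← Matrix.map_add, key]
      exact fun a b => map_add ρ a b
    rw [fact]
    set U : Matrix (Fin 2 ⊕ Fin m) (Fin 2) (DualNumber ℂ) :=
      (1 : Matrix (Fin 2 ⊕ Fin m) (Fin 2 ⊕ Fin m) (DualNumber ℂ)).submatrix id Sum.inl with hU
    set V : Matrix (Fin 2) (Fin 2 ⊕ Fin m) (DualNumber ℂ) :=
      (1 : Matrix (Fin 2 ⊕ Fin m) (Fin 2 ⊕ Fin m) (DualNumber ℂ)).submatrix Sum.inl id with hV
    have hUV : U * V = A.map ρ := by
      refine Matrix.ext fun x y => ?_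
      cases x with
      | inl a =>
        cases y with
        | inl b =>
          by_cases hab : a = b <;>
            simp [hU, hV, hA, Matrix.mul_apply, Matrix.one_apply, Fin.sum_univ_two,
              Matrix.map_apply, hab, Sum.inl.injEq]
        | inr b =>
          simp [hU, hV, hA, Matrix.mul_apply, Matrix.one_apply, Fin.sum_univ_two,
            Matrix.map_apply]
      | inr a =>
        cases y <;>
          simp [hU, hV, hA, Matrix.mul_apply, Matrix.one_apply, Fin.sum_univ_two,
            Matrix.map_apply]
    rw [← hUV, ← Matrix.mul_assoc P U V, Matrix.mul_assoc (P * U) V Q]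
    have hsub : ((P * U) * (V * Q)).submatrix f g
        = (P * U).submatrix f id * (V * Q).submatrix id g := by
      refine Matrix.ext fun i j => ?_
      simp [Matrix.mul_apply]
    rw [hsub]
    exact det_mul_rect_aux _ _
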